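/- If a polynomial map F : ℝⁿ → ℝⁿ (each component a polynomial) has a polynomial inverse G : ℝⁿ → ℝⁿ, then the Jacobian determinant det(J_F(x)) is a nonzero constant, i.e., there exists c ∈ ℝ, c ≠ 0, such that det(J_F(x)) = c for all x ∈ ℝⁿ. -/

import Mathlib

open MvPolynomial

/-- Formal chain rule for composition of multivariate polynomials. -/
lemma chain_rule {n : ℕ} (F : Fin n → MvPolynomial (Fin n) ℝ) (j : Fin n)
    (p : MvPolynomial (Fin n) ℝ) :
    pderiv j (aeval F p) = ∑ k, aeval F (pderiv k p) * pderiv j (F k) := by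
  induction p using MvPolynomial.induction_on with
  | C a => simp
  | add p q hp hq =>
      simp only [map_add, hp, hq, ← Finset.sum_add_distrib, add_mul]
  | mul_X p i hp =>
      simp only [map_mul, aeval_X, Derivation.leibniz, pderiv_X, smul_eq_mul, map_add, hp,
        add_mul, Finset.sum_add_distrib]
      congr 1
      · rw [Finset.sum_eq_single i]
        · simp [Pi.single_eq_same]
        · intro k _ hk
          rw [Pi.single_eq_of_ne hk.symm]
          simp
        · simp
      · rw [Finset.mul_sum]
        apply Finset.sum_congr rfl
        intro k _
        ring

/-- A unit in a multivariate polynomial ring over ℝ is a constant. -/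
lemma isUnit_eq_C {n : ℕ} (p : MvPolynomial (Fin n) ℝ) (h : IsUnit p) :
    ∃ c : ℝ, p = C c := by
  induction n with
  | zero => exact ⟨constantCoeff p, p.eq_C_of_isEmpty⟩
  | succ n ih =>
      have h2 : IsUnit (finSuccEquiv ℝ n p) := h.map _
      have hdeg : (finSuccEquiv ℝ n p).degree = 0 :=
        Polynomial.degree_eq_zero_of_isUnit h2
      have ha := Polynomial.eq_C_of_degree_le_zero hdeg.le
      have ha' : IsUnit ((finSuccEquiv ℝ n p).coeff 0) := by
        rw [ha] at h2; exact Polynomial.isUnit_C.mp h2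
      obtain ⟨c, hc⟩ := ih _ ha'
      refine ⟨c, (finSuccEquiv ℝ n).injective ?_⟩
      rw [ha, hc]
      simp [MvPolynomial.finSuccEquiv_apply]

theorem stmt1 (n : ℕ) (F G : Fin n → MvPolynomial (Fin n) ℝ)
    (hGF : ∀ x : Fin n → ℝ,
      (fun i => MvPolynomial.eval (fun j => MvPolynomial.eval x (F j)) (G i)) = x)
    (hFG : ∀ y : Fin n → ℝ,
      (fun i => MvPolynomial.eval (fun j => MvPolynomial.eval y (G j)) (F i)) = y) :
    ∃ c : ℝ, c ≠ 0 ∧ ∀ x : Fin n → ℝ,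
      (Matrix.of fun i j => MvPolynomial.eval x (MvPolynomial.pderiv j (F i))).det = c := by
  classical
  -- composition identity at the level of polynomials
  have hcomp : ∀ i, aeval F (G i) = X i := by
    intro i
    apply MvPolynomial.funext
    intro x
    have h1 : eval x (aeval F (G i)) = eval (fun j => eval x (F j)) (G i) :=
      eval₂Hom_bind₁ (RingHom.id ℝ) x F (G i)
    rw [h1, congrFun (hGF x) i, eval_X]
  -- Jacobian matrices
  set A : Matrix (Fin n) (Fin n) (MvPolynomial (Fin n) ℝ) :=
    Matrix.of fun i j => pderiv j (F i) with hA
  set M : Matrix (Fin n) (Fin n) (MvPolynomial (Fin n) ℝ) :=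
    Matrix.of fun i k => aeval F (pderiv k (G i)) with hM
  have hMA : M * A = 1 := by
    ext i j
    rw [Matrix.mul_apply]
    have := chain_rule F j (G i)
    rw [hcomp i, pderiv_X] at this
    simp only [hM, hA, Matrix.of_apply]
    rw [← this]
    by_cases hij : i = j <;> simp [hij, Matrix.one_apply, Pi.single_apply]
  have hdet : M.det * A.det = 1 := by
    rw [← Matrix.det_mul, hMA, Matrix.det_one]
  have hunit : IsUnit A.det := IsUnit.of_mul_eq_one _ (by rw [mul_comm] at hdet; exact hdet)
  obtain ⟨c, hc⟩ := isUnit_eq_C A.det hunit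
  refine ⟨c, ?_, ?_⟩
  · intro hc0
    rw [hc0, map_zero] at hc
    rw [hc, mul_zero] at hdet
    exact zero_ne_one hdet
  · intro x
    have h2 : (MvPolynomial.eval x).mapMatrix A
        = Matrix.of fun i j => eval x (pderiv j (F i)) := by
      ext i j
      simp [hA]
    calc (Matrix.of fun i j => eval x (pderiv j (F i))).det
        = ((MvPolynomial.eval x).mapMatrix A).det := by rw [h2]
      _ = eval x A.det := ((MvPolynomial.eval x).map_det A).symm
      _ = c := by rw [hc, eval_C]
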